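/- Let n ≥ 2 be a positive integer, c ∈ 𝔽_{2^n} with c ≠ 0 and c ≠ 1, and F: 𝔽_{2^n} → 𝔽_{2^n} the inverse function F(x) = x^{2^n − 2}. Then for every b ∈ 𝔽_{2^n}, the c-BCT entry _cB_F(0, b) = 1, and for every a ∈ 𝔽_{2^n}, the c-BCT entry _cB_F(a, 0) = 1. -/

import Mathlib

/-- for the inverse function `F(x) = x^{2^n−2}` on `𝔽_{2^n}` (`n ≥ 2`)
and `c ≠ 0,1`, the `c`-BCT entries `_cB_F(0,b)` and `_cB_F(a,0)` all equal `1`. -/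
theorem inverse_cBCT_boundary_entries (n : ℕ) (hn : 2 ≤ n)
    (c : GaloisField 2 n) (hc0 : c ≠ 0) (hc1 : c ≠ 1) :
    (∀ b : GaloisField 2 n,
      Nat.card {xg : GaloisField 2 n × GaloisField 2 n //
        (xg.1 + xg.2) ^ (2 ^ n - 2) + c * xg.1 ^ (2 ^ n - 2) = b ∧
        (xg.1 + xg.2) ^ (2 ^ n - 2) + c⁻¹ * xg.1 ^ (2 ^ n - 2) = b} = 1) ∧
    (∀ a : GaloisField 2 n,
      Nat.card {xg : GaloisField 2 n × GaloisField 2 n //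
        (xg.1 + xg.2) ^ (2 ^ n - 2) + c * xg.1 ^ (2 ^ n - 2) = 0 ∧
        (xg.1 + xg.2 + a) ^ (2 ^ n - 2) + c⁻¹ * (xg.1 + a) ^ (2 ^ n - 2) = 0} = 1) := by
  letI : Fintype (GaloisField 2 n) := Fintype.ofFinite _
  have hcard : Fintype.card (GaloisField 2 n) = 2 ^ n := by
    rw [← Nat.card_eq_fintype_card]; exact GaloisField.card 2 n (by omega)
  have htwo : (2 : GaloisField 2 n) = 0 := by
    have := CharP.cast_eq_zero (GaloisField 2 n) 2
    exact_mod_cast this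
  have hinv : ∀ x : GaloisField 2 n, x ^ (2 ^ n - 2) = x⁻¹ := by
    intro x
    have h4 : 4 ≤ 2 ^ n := by
      calc (4:ℕ) = 2 ^ 2 := rfl
        _ ≤ 2 ^ n := Nat.pow_le_pow_right (by norm_num) hn
    rcases eq_or_ne x 0 with rfl | hx
    · rw [zero_pow (by omega), inv_zero]
    · have h1 : x ^ (2 ^ n - 1) = 1 := by
        rw [← hcard]; exact FiniteField.pow_card_sub_one_eq_one x hx
      have hm : x * x ^ (2 ^ n - 2) = 1 := by
        rw [← pow_succ', show 2 ^ n - 2 + 1 = 2 ^ n - 1 by omega]; exact h1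
      exact eq_inv_of_mul_eq_one_right hm
  have hci0 : c⁻¹ ≠ 0 := inv_ne_zero hc0
  have hci1 : c⁻¹ ≠ 1 := fun h => hc1 (inv_eq_one.mp h)
  have hc1' : c + 1 ≠ 0 := by
    intro h; apply hc1; linear_combination h - htwo
  have hci1' : c⁻¹ + 1 ≠ 0 := by
    intro h; apply hci1; linear_combination h - htwo
  have hcc' : c * c⁻¹ = 1 := mul_inv_cancel₀ hc0
  have hcc : c + c⁻¹ ≠ 0 := by
    intro h
    apply hc1'
    have h2 : c * c + 1 = 0 := by
      field_simp at h
      linear_combination h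
    have : (c + 1) * (c + 1) = 0 := by linear_combination h2 + c * htwo
    rcases mul_eq_zero.mp this with h | h <;> exact h
  constructor
  · intro b
    rw [Nat.card_eq_one_iff_exists]
    refine ⟨⟨(0, b⁻¹), ?_, ?_⟩, ?_⟩
    · simp [hinv, inv_inv]
    · simp [hinv, inv_inv]
    · rintro ⟨⟨x, g⟩, h1, h2⟩
      simp only [hinv] at h1 h2
      have h3 : (c + c⁻¹) * x⁻¹ = 0 := by
        linear_combination h1 - h2 + c⁻¹ * x⁻¹ * htwo
      have hx : x⁻¹ = 0 := by
        rcases mul_eq_zero.mp h3 with h | h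
        · exact absurd h hcc
        · exact h
      have hx0 : x = 0 := inv_eq_zero.mp hx
      subst hx0
      have hg : g⁻¹ = b := by simpa [hx] using h1
      have : g = b⁻¹ := by rw [← hg, inv_inv]
      exact Subtype.ext (Prod.ext (by simp) this)
  · intro a
    rw [Nat.card_eq_one_iff_exists]
    have hmem1 : (c * a / (c + 1) + a) ^ (2 ^ n - 2)
        + c * (c * a / (c + 1)) ^ (2 ^ n - 2) = 0 := by
      rcases eq_or_ne a 0 with rfl | ha
      · simp [hinv]
      · have e2 : c * a / (c + 1) + a = a / (c + 1) := by
          field_simp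
          linear_combination c * htwo
        rw [hinv, hinv, e2, inv_div, inv_div]
        field_simp
        linear_combination (1 + c) * htwo
    have hmem2 : (c * a / (c + 1) + a + a) ^ (2 ^ n - 2)
        + c⁻¹ * (c * a / (c + 1) + a) ^ (2 ^ n - 2) = 0 := by
      rcases eq_or_ne a 0 with rfl | ha
      · simp [hinv]
      · have e2 : c * a / (c + 1) + a = a / (c + 1) := by
          field_simp
          linear_combination c * htwo
        have e3 : c * a / (c + 1) + a + a = c * a / (c + 1) := by
          linear_combination a * htwo
        rw [hinv, hinv, e3, e2, inv_div, inv_div]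
        field_simp
        linear_combination ((c+1)*a + 1 + c - c*a - a) * htwo
    refine ⟨⟨(c * a / (c + 1), a), hmem1, hmem2⟩, ?_⟩
    rintro ⟨⟨x, g⟩, h1, h2⟩
    simp only [hinv] at h1 h2
    rcases eq_or_ne x 0 with rfl | hx
    · -- then g = 0 and a = 0
      have hg : g = 0 := by
        rw [inv_zero, mul_zero, add_zero, zero_add, inv_eq_zero] at h1
        exact h1
      subst hg
      have ha : a = 0 := by
        simp only [zero_add] at h2
        have h3 : (c⁻¹ + 1) * a⁻¹ = 0 := by linear_combination h2
        rcases mul_eq_zero.mp h3 with h | h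
        · exact absurd h hci1'
        · exact inv_eq_zero.mp h
      subst ha
      refine Subtype.ext (Prod.ext ?_ rfl)
      simp
    · have hy0 : x + g ≠ 0 := by
        intro h
        rw [h, inv_zero] at h1
        simp only [zero_add, mul_eq_zero, inv_eq_zero] at h1
        rcases h1 with h | h
        · exact hc0 h
        · exact hx h
      have hy : x + g = c⁻¹ * x := by
        have h1' : (x + g)⁻¹ = c * x⁻¹ := by linear_combination h1 - c * x⁻¹ * htwo
        have h := congrArg (·⁻¹) h1'
        simp only [inv_inv, mul_inv, inv_inv] at h
        rw [h, mul_comm]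
      have hxa : x + a ≠ 0 := by
        intro h
        rw [h, inv_zero, mul_zero, add_zero, inv_eq_zero, hy] at h2
        have hax : a = x := by linear_combination -h + a * htwo
        rw [hax] at h2
        have : c⁻¹ = 1 := by
          have hx2 : (c⁻¹ + 1) * x = 0 := by linear_combination h2
          rcases mul_eq_zero.mp hx2 with h' | h'
          · linear_combination h' - htwo
          · exact absurd h' hx
        exact hci1 this
      have hca : x + g + a ≠ 0 := by
        intro h
        rw [h, inv_zero, zero_add] at h2
        rcases mul_eq_zero.mp h2 with h' | h'
        · exact hc0 (inv_eq_zero.mp h')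
        · exact hxa (inv_eq_zero.mp h')
      have h2' : (x + g + a)⁻¹ = c⁻¹ * (x + a)⁻¹ := by
        linear_combination h2 - c⁻¹ * (x + a)⁻¹ * htwo
      have key : c⁻¹ * x + a = c * (x + a) := by
        have h := congrArg (·⁻¹) h2'
        simp only [inv_inv, mul_inv, inv_inv] at h
        rw [← hy, h, mul_comm]
      have hx2 : x * (c + 1) = c * a := by
        have : x * (c+1) * (c+1) = c * a * (c+1) := by
          linear_combination c * key + x * hcc' + (x*c^2 + x*c + x - c*a - c*x*c⁻¹) * htwo
        exact mul_right_cancel₀ hc1' this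
      refine Subtype.ext (Prod.ext ?_ ?_)
      · show x = c * a / (c + 1)
        rw [eq_div_iff hc1', mul_comm x (c+1), mul_comm c a]
        linear_combination hx2 - a*c*htwo + c*a*htwo
      · show g = a
        have hg : g = c⁻¹ * x + x := by linear_combination hy - x * htwo
        rw [hg]
        linear_combination c⁻¹ * hx2 + a * hcc' - x*c⁻¹*htwo - x*hcc' + c⁻¹*x*htwo
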